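/- For any matrix γ = (a b; c d) in SL(2,ℤ) with c ≠ 0, the quantity Φ(γ) = (a+d)/c − 12·sign(c)·s(a;|c|) is an integer. -/

import Mathlib

open scoped Classical in
/-- The sawtooth function `((x))`. -/
noncomputable def sawtooth (x : ℝ) : ℝ :=
  if ∃ n : ℤ, (n : ℝ) = x then 0 else Int.fract x - 1/2

/-- The Dedekind sum `s(a;c)`. -/
noncomputable def dedekindSum (a c : ℤ) : ℝ :=
  ∑ n ∈ Finset.Ico (1:ℤ) c, sawtooth ((n : ℝ) / c) * sawtooth ((n * a : ℝ) / c)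

lemma exists_int_div_iff {m c : ℤ} (hc : c ≠ 0) :
    (∃ n : ℤ, (n : ℝ) = (m : ℝ) / (c : ℝ)) ↔ c ∣ m := by
  have hcR : (c : ℝ) ≠ 0 := Int.cast_ne_zero.mpr hc
  constructor
  · rintro ⟨n, hn⟩
    have hnm : (n : ℝ) * c = m := by field_simp at hn; linarith [hn]
    exact Dvd.intro_left n (by exact_mod_cast hnm)
  · rintro ⟨n, rfl⟩
    exact ⟨n, by push_cast; field_simp⟩

lemma sawtooth_div {m c : ℤ} (hc : 0 < c) (h : ¬ c ∣ m) :
    sawtooth ((m : ℝ) / c) = ((m % c : ℤ) : ℝ) / c - 1/2 := by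
  have hne : ¬ ∃ n : ℤ, (n : ℝ) = (m : ℝ) / c := by
    rw [exists_int_div_iff hc.ne']; exact h
  rw [sawtooth, if_neg hne]
  have h1 : ((c.toNat : ℕ) : ℝ) = (c : ℝ) := by
    exact_mod_cast congrArg (Int.cast : ℤ → ℝ) (Int.toNat_of_nonneg hc.le)
  have := Int.fract_div_intCast_eq_div_intCast_mod (k := ℝ) (m := m) (n := c.toNat)
  rw [h1] at this
  rw [this]
  congr 2
  rw [Int.toNat_of_nonneg hc.le]

lemma sawtooth_neg (x : ℝ) : sawtooth (-x) = - sawtooth x := by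
  by_cases h : ∃ n : ℤ, (n : ℝ) = x
  · have h' : ∃ n : ℤ, (n : ℝ) = -x := by
      obtain ⟨n, rfl⟩ := h; exact ⟨-n, by push_cast; ring⟩
    rw [sawtooth, sawtooth, if_pos h, if_pos h', neg_zero]
  · have h' : ¬ ∃ n : ℤ, (n : ℝ) = -x := by
      rintro ⟨n, hn⟩; exact h ⟨-n, by push_cast; linarith⟩
    rw [sawtooth, sawtooth, if_neg h, if_neg h']
    have hfr : Int.fract x ≠ 0 := by
      intro h0
      obtain ⟨z, hz⟩ : ∃ z : ℤ, x = z := by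
        refine ⟨⌊x⌋, ?_⟩
        have := Int.fract_add_floor x
        rw [h0] at this; linarith
      exact h ⟨z, hz.symm⟩
    rw [Int.fract_neg hfr]; ring

lemma dedekindSum_neg (a c : ℤ) : dedekindSum (-a) c = - dedekindSum a c := by
  rw [dedekindSum, dedekindSum, ← Finset.sum_neg_distrib]
  refine Finset.sum_congr rfl fun n _ => ?_
  have : ((n : ℝ) * ((-a : ℤ) : ℝ)) / c = -((n * a : ℝ) / c) := by push_cast; ring
  rw [this, sawtooth_neg]; ring

lemma Int.sum_Ico_succ_top' {a b : ℤ} (hab : a ≤ b) (f : ℤ → ℤ) :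
    ∑ n ∈ Finset.Ico a (b + 1), f n = (∑ n ∈ Finset.Ico a b, f n) + f b := by
  have h1 : Finset.Ico a (b + 1) = insert b (Finset.Ico a b) := by
    rw [show b + 1 = b + 1 from rfl]
    ext x
    simp [Int.lt_add_one_iff, le_iff_lt_or_eq, or_comm]
    omega
  rw [h1, Finset.sum_insert Finset.right_notMem_Ico, add_comm]

lemma sum_Ico_id_int {c : ℤ} (hc : 1 ≤ c) :
    2 * ∑ n ∈ Finset.Ico (1:ℤ) c, n = c * (c - 1) := by
  refine Int.le_induction (motive := fun c _ => 2 * ∑ n ∈ Finset.Ico (1:ℤ) c, n = c * (c - 1)) ?_ ?_ c hc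
  · norm_num [Finset.Ico_self]
  · intro n hn ih
    rw [Int.sum_Ico_succ_top' hn]
    linear_combination ih

lemma sum_Ico_sq_int {c : ℤ} (hc : 1 ≤ c) :
    6 * ∑ n ∈ Finset.Ico (1:ℤ) c, n ^ 2 = (c - 1) * c * (2 * c - 1) := by
  refine Int.le_induction (motive := fun c _ => 6 * ∑ n ∈ Finset.Ico (1:ℤ) c, n ^ 2 = (c - 1) * c * (2 * c - 1)) ?_ ?_ c hc
  · norm_num [Finset.Ico_self]
  · intro n hn ih
    rw [Int.sum_Ico_succ_top' (f := fun n => n ^ 2) hn]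
    linear_combination ih

lemma sum_emod_perm {a b d c : ℤ} (hc : 0 < c) (h : a * d - b * c = 1) (g : ℤ → ℤ) :
    ∑ n ∈ Finset.Ico (1:ℤ) c, g (n * a % c) = ∑ n ∈ Finset.Ico (1:ℤ) c, g n := by
  have hcopa : IsCoprime c a := ⟨-b, d, by linear_combination h⟩
  have hcopd : IsCoprime c d := ⟨-b, a, by linear_combination h⟩
  have hmem : ∀ (e : ℤ), IsCoprime c e → ∀ n ∈ Finset.Ico (1:ℤ) c,
      n * e % c ∈ Finset.Ico (1:ℤ) c := by
    intro e he n hn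
    simp only [Finset.mem_Ico] at hn ⊢
    have h0 : 0 ≤ n * e % c := Int.emod_nonneg _ hc.ne'
    have h1 : n * e % c < c := Int.emod_lt_of_pos _ hc
    refine ⟨?_, h1⟩
    rcases h0.lt_or_eq with h2 | h2
    · omega
    · exfalso
      have hd1 : c ∣ n * e := Int.dvd_of_emod_eq_zero h2.symm
      have hd2 : c ∣ n := he.dvd_of_dvd_mul_right hd1
      have := Int.le_of_dvd (by omega) hd2
      omega
  have hinv : ∀ (e f : ℤ), e * f = 1 + b * c → ∀ n ∈ Finset.Ico (1:ℤ) c,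
      (n * e % c) * f % c = n := by
    intro e f hef n hn
    simp only [Finset.mem_Ico] at hn
    have e1 : (n * e % c * f) % c = (n * e * f) % c := by
      rw [Int.mul_emod, Int.emod_emod_of_dvd _ dvd_rfl, ← Int.mul_emod]
    rw [e1, mul_assoc, hef]
    have : n * (1 + b * c) = n + (n * b) * c := by ring
    rw [this, Int.add_mul_emod_self_right]
    exact Int.emod_eq_of_lt (by omega) hn.2
  refine Finset.sum_nbij' (i := fun n => n * a % c) (j := fun n => n * d % c)
    (hmem a hcopa) (hmem d hcopd) ?_ ?_ (fun n _ => rfl)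
  · exact hinv a d (by linear_combination h)
  · exact hinv d a (by linear_combination h)

lemma main_pos {a b d c : ℤ} (hc : 0 < c) (h : a * d - b * c = 1) :
    ∃ k : ℤ, ((a + d : ℤ) : ℝ) / c - 12 * dedekindSum a c = (k : ℝ) := by
  have hc1 : (1:ℤ) ≤ c := hc
  have hcop : IsCoprime c a := ⟨-b, d, by linear_combination h⟩
  have hcR : (c:ℝ) ≠ 0 := Int.cast_ne_zero.mpr hc.ne'
  set r : ℤ → ℤ := fun n => n * a % c with hr
  set q : ℤ → ℤ := fun n => n * a / c with hq
  have hrq : ∀ n : ℤ, r n = n * a - c * q n := fun n => Int.emod_def _ _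
  set P2 : ℤ := ∑ n ∈ Finset.Ico (1:ℤ) c, n ^ 2 with hP2
  set S : ℤ := ∑ n ∈ Finset.Ico (1:ℤ) c, n * q n with hS
  set T : ℤ := ∑ n ∈ Finset.Ico (1:ℤ) c, (q n) ^ 2 with hT
  set N : ℤ := ∑ n ∈ Finset.Ico (1:ℤ) c, n with hN
  set U : ℤ := ∑ n ∈ Finset.Ico (1:ℤ) c, (2 * n - c) * (2 * r n - c) with hU
  have hsum_r : ∑ n ∈ Finset.Ico (1:ℤ) c, r n = N := sum_emod_perm hc h (fun x => x)
  have hsum_r2 : ∑ n ∈ Finset.Ico (1:ℤ) c, (r n) ^ 2 = P2 := sum_emod_perm hc h (fun x => x ^ 2)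
  have hsum_nr : ∑ n ∈ Finset.Ico (1:ℤ) c, n * r n = a * P2 - c * S := by
    rw [hP2, hS, Finset.mul_sum, Finset.mul_sum, ← Finset.sum_sub_distrib]
    exact Finset.sum_congr rfl fun n _ => by rw [hrq n]; ring
  have hcard : ((Finset.Ico (1:ℤ) c).card : ℤ) = c - 1 := by
    exact_mod_cast Int.card_Ico_of_le _ _ hc1
  have hUval : U = 4 * (a * P2 - c * S) - 4 * c * N + (c - 1) * c ^ 2 := by
    rw [hU]
    rw [Finset.sum_congr rfl (fun n _ => show (2*n-c)*(2*(r n)-c)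
      = 4*(n * r n) - 2*c*n - 2*c*(r n) + c^2 from by ring)]
    rw [Finset.sum_add_distrib, Finset.sum_sub_distrib, Finset.sum_sub_distrib,
      ← Finset.mul_sum, ← Finset.mul_sum, ← Finset.mul_sum,
      Finset.sum_const, nsmul_eq_mul, hcard, hsum_nr, hsum_r, ← hN]
    ring
  have h6P2 : 6 * P2 = (c - 1) * c * (2 * c - 1) := sum_Ico_sq_int hc1
  have h2N : 2 * N = c * (c - 1) := sum_Ico_id_int hc1
  have h3U : 3 * U = c * (2*a*(c-1)*(2*c-1) - 12*S - 3*c*(c-1)) := by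
    linear_combination 3 * hUval + 2 * a * h6P2 - 6 * c * h2N
  have hB : 2 * a * c * S = (a^2 - 1) * P2 + c^2 * T := by
    have e2 : ∑ n ∈ Finset.Ico (1:ℤ) c, (r n) ^ 2
        = a^2 * P2 - 2*a*c*S + c^2 * T := by
      rw [Finset.sum_congr rfl (fun n _ => show (r n)^2
        = a^2 * n^2 - 2*a*c*(n * q n) + c^2 * (q n)^2 from by rw [hrq n]; ring)]
      rw [Finset.sum_add_distrib, Finset.sum_sub_distrib,
        ← Finset.mul_sum, ← Finset.mul_sum, ← Finset.mul_sum, ← hP2, ← hS, ← hT]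
    linear_combination hsum_r2.symm.trans e2
  have h12aS : 12 * a * S = (a^2 - 1) * (c - 1) * (2*c - 1) + 6 * c * T := by
    have hcc : c * (12 * a * S) = c * ((a^2 - 1) * (c - 1) * (2*c - 1) + 6 * c * T) := by
      linear_combination 6 * hB + (a^2 - 1) * h6P2
    exact mul_left_cancel₀ hc.ne' hcc
  set M : ℤ := 2*a*(c-1)*(2*c-1) - 12*S - 3*c*(c-1) with hM
  have hmul : a * (a + d - M) = c * (b + (-(a^2+1)*(2*c-3) + 6*T + 3*a*c - 3*a)) := by
    rw [hM]; linear_combination h12aS + h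
  have hdvd : c ∣ (a + d - M) := hcop.dvd_of_dvd_mul_left ⟨_, hmul⟩
  have hsaw : dedekindSum a c
      = ∑ n ∈ Finset.Ico (1:ℤ) c, (((2*n - c)*(2*(r n) - c) : ℤ) : ℝ) / (4*(c:ℝ)^2) := by
    rw [dedekindSum]
    refine Finset.sum_congr rfl fun n hn => ?_
    simp only [Finset.mem_Ico] at hn
    have hn1 : ¬ c ∣ n := fun hdd => by
      have := Int.le_of_dvd (by omega) hdd; omega
    have hna : ¬ c ∣ n * a := fun hdd => hn1 (hcop.dvd_of_dvd_mul_right hdd)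
    have hnn : n % c = n := Int.emod_eq_of_lt (by omega) hn.2
    have e2 : ((n:ℝ) * a)/(c:ℝ) = ((n * a : ℤ):ℝ)/c := by push_cast; ring
    rw [e2, sawtooth_div hc hn1, sawtooth_div hc hna, hnn]
    have e3 : (r n : ℝ) = ((n * a % c : ℤ) : ℝ) := rfl
    rw [← e3]
    push_cast
    field_simp
    ring
  have hUreal : dedekindSum a c = (U : ℝ) / (4*(c:ℝ)^2) := by
    rw [hsaw, hU, Int.cast_sum, Finset.sum_div]
  refine ⟨(a + d - M) / c, ?_⟩
  have hk : ((a + d - M) / c) * c = a + d - M := Int.ediv_mul_cancel hdvd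
  have hkR : (((a + d - M) / c : ℤ) : ℝ) * (c:ℝ) = (a:ℝ) + d - M := by exact_mod_cast hk
  have h3UR : 3 * (U:ℝ) = (c:ℝ) * (M:ℝ) := by exact_mod_cast h3U
  rw [hUreal]
  have e1 : (12:ℝ) * ((U:ℝ)/(4*(c:ℝ)^2)) = (3*(U:ℝ))/(c:ℝ)^2 := by ring
  rw [e1, h3UR]
  have e2 : ((c:ℝ) * (M:ℝ))/(c:ℝ)^2 = (M:ℝ)/(c:ℝ) := by
    field_simp
  rw [e2]
  push_cast
  rw [div_sub_div_same, div_eq_iff hcR]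
  push_cast at hkR
  linear_combination -hkR

theorem Phi_is_integer (γ : Matrix.SpecialLinearGroup (Fin 2) ℤ)
    (hc : γ 1 0 ≠ 0) :
    ∃ k : ℤ,
      ((γ 0 0 + γ 1 1 : ℤ) : ℝ) / (γ 1 0 : ℤ)
        - 12 * ((γ 1 0).sign : ℝ) * dedekindSum (γ 0 0) |γ 1 0| = (k : ℝ) := by
  have hdet : γ 0 0 * γ 1 1 - γ 0 1 * γ 1 0 = 1 := by
    have hp := γ.property
    rw [Matrix.det_fin_two] at hp
    exact hp
  rcases lt_or_gt_of_ne hc with hneg | hpos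
  · -- c < 0
    have hdet' : (-(γ 0 0)) * (-(γ 1 1)) - (-(γ 0 1)) * (-(γ 1 0)) = 1 := by
      linear_combination hdet
    obtain ⟨k, hk⟩ := main_pos (by omega : (0:ℤ) < -(γ 1 0)) hdet'
    refine ⟨k, ?_⟩
    rw [dedekindSum_neg] at hk
    have hsign : ((γ 1 0).sign : ℝ) = -1 := by
      rw [Int.sign_eq_neg_one_iff_neg.mpr hneg]; norm_num
    have habs : |γ 1 0| = -(γ 1 0) := abs_of_neg hneg
    rw [hsign, habs]
    have hdiv : ((-(γ 0 0) + -(γ 1 1) : ℤ) : ℝ) / ((-(γ 1 0) : ℤ) : ℝ)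
        = ((γ 0 0 + γ 1 1 : ℤ) : ℝ) / ((γ 1 0 : ℤ) : ℝ) := by
      push_cast
      rw [show (-(γ 0 0 : ℝ)) + -(γ 1 1 : ℝ) = -((γ 0 0 : ℝ) + γ 1 1) from by ring,
        show -(γ 1 0 : ℝ) = -((γ 1 0 : ℝ)) from rfl, neg_div_neg_eq]
    rw [hdiv] at hk
    linear_combination hk
  · -- c > 0
    obtain ⟨k, hk⟩ := main_pos hpos hdet
    refine ⟨k, ?_⟩
    have hsign : ((γ 1 0).sign : ℝ) = 1 := by
      rw [Int.sign_eq_one_iff_pos.mpr hpos]; norm_num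
    have habs : |γ 1 0| = γ 1 0 := abs_of_pos hpos
    rw [hsign, habs]
    linear_combination hk
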